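/- Let γ > 1, k > 0 and u_- ∈ ℝ, let I ⊆ ℝ be an open interval, and let w : ℝ × I → ℝ be a C² solution of the Burgers equation w_t + w w_x = 0 with w(x,t) > u_- for all (x,t). Define ū = (2w + (γ−1)u_-)/(γ+1), ρ̄ = ((γ−1)(ū − u_-)/(2k))^{2/(γ−1)}, θ̄ = (k²/(γ(γ−1))) ρ̄^{γ−1}, and p̄ = (γ−1) ρ̄ θ̄. Then (ρ̄, ū, θ̄) solves the full compressible Euler system: ρ̄_t + (ρ̄ ū)_x = 0, (ρ̄ ū)_t + (ρ̄ ū² + p̄)_x = 0, and [ρ̄(θ̄ + ū²/2)]_t + [ρ̄ ū (θ̄ + ū²/2) + ū p̄]_x = 0, at every point of ℝ × I. -/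

import Mathlib

open Real

noncomputable def Uf (γ um : ℝ) : ℝ → ℝ := fun r => (2 * r + (γ - 1) * um) / (γ + 1)
noncomputable def Rf (γ k um : ℝ) : ℝ → ℝ :=
  fun r => ((γ - 1) / ((γ + 1) * k) * (r - um)) ^ (2 / (γ - 1))
noncomputable def Tf (γ k um : ℝ) : ℝ → ℝ :=
  fun r => k ^ 2 / (γ * (γ - 1)) * ((γ - 1) / ((γ + 1) * k) * (r - um)) ^ 2
noncomputable def Pf (γ k um : ℝ) : ℝ → ℝ :=
  fun r => (γ - 1) * (Rf γ k um r * Tf γ k um r)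

set_option maxHeartbeats 1000000 in
lemma key (γ k um : ℝ) (hγ : 1 < γ) (hk : 0 < k) {r : ℝ} (hr : um < r) :
    ∃ d1 d2 d3 : ℝ,
      (HasDerivAt (fun s => Rf γ k um s) d1 r ∧
       HasDerivAt (fun s => Rf γ k um s * Uf γ um s) (r * d1) r) ∧
      (HasDerivAt (fun s => Rf γ k um s * Uf γ um s) d2 r ∧
       HasDerivAt (fun s => Rf γ k um s * Uf γ um s ^ 2 + Pf γ k um s) (r * d2) r) ∧
      (HasDerivAt (fun s => Rf γ k um s * (Tf γ k um s + Uf γ um s ^ 2 / 2)) d3 r ∧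
       HasDerivAt (fun s => Rf γ k um s * Uf γ um s * (Tf γ k um s + Uf γ um s ^ 2 / 2)
          + Uf γ um s * Pf γ k um s) (r * d3) r) := by
  have hγ1 : γ - 1 ≠ 0 := by linarith
  have hγ2 : γ + 1 ≠ 0 := by linarith
  have hγ0 : γ ≠ 0 := by linarith
  have hk' : k ≠ 0 := hk.ne'
  set A : ℝ := (γ - 1) / ((γ + 1) * k) with hA
  set m : ℝ := 2 / (γ - 1) with hm
  set K : ℝ := k ^ 2 / (γ * (γ - 1)) with hK
  have hApos : 0 < A := div_pos (by linarith) (mul_pos (by linarith) hk)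
  set b : ℝ := A * (r - um) with hbdef
  have hb : 0 < b := mul_pos hApos (by linarith)
  -- inner linear function
  have hgb : HasDerivAt (fun s : ℝ => A * (s - um)) A r := by
    simpa using ((hasDerivAt_id r).sub_const um).const_mul A
  have hR : HasDerivAt (fun s => Rf γ k um s) (m * b ^ (m - 1) * A) r := by
    have h0 := Real.hasDerivAt_rpow_const (x := b) (p := m) (Or.inl hb.ne')
    have h1 := h0.comp r hgb
    simp only [Rf]
    exact h1
  have hU : HasDerivAt (fun s => Uf γ um s) (2 / (γ + 1)) r := by
    have := (((hasDerivAt_id r).const_mul 2).add_const ((γ - 1) * um)).div_const (γ + 1)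
    simpa [Uf] using this
  have hT : HasDerivAt (fun s => Tf γ k um s) (K * (2 * b * A)) r := by
    have := (hgb.pow 2).const_mul K
    simp only [Tf]
    refine this.congr_deriv ?_
    push_cast
    ring
  have hP : HasDerivAt (fun s => Pf γ k um s)
      ((γ - 1) * ((m * b ^ (m - 1) * A) * Tf γ k um r + Rf γ k um r * (K * (2 * b * A)))) r :=
    (hR.mul hT).const_mul (γ - 1)
  -- values
  have hRv : Rf γ k um r = b ^ m := rfl
  have hTv : Tf γ k um r = K * b ^ 2 := rfl
  have hbm : b ^ m = b ^ (m - 1) * b := by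
    have : b ^ m = b ^ (m - 1 + 1) := by norm_num
    rw [this, Real.rpow_add_one hb.ne']
  have hUv : Uf γ um r = (2 * r + (γ - 1) * um) / (γ + 1) := rfl
  have hPv : Pf γ k um r = (γ - 1) * (b ^ m * (K * b ^ 2)) := rfl
  clear_value A m K b
  refine ⟨m * b ^ (m - 1) * A,
      m * b ^ (m - 1) * A * Uf γ um r + Rf γ k um r * (2 / (γ + 1)),
      m * b ^ (m - 1) * A * (Tf γ k um r + Uf γ um r ^ 2 / 2)
        + Rf γ k um r * (K * (2 * b * A) + Uf γ um r * (2 / (γ + 1))),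
      ⟨hR, ?_⟩, ⟨hR.mul hU, ?_⟩, ⟨?_, ?_⟩⟩
  · refine (hR.mul hU).congr_deriv ?_
    rw [hRv, hUv, hbm]
    generalize b ^ (m - 1) = X
    simp only [hm, hbdef, hA]
    field_simp
    ring
  · refine ((hR.mul (hU.pow 2)).add hP).congr_deriv ?_
    simp only [Pi.add_apply, Pi.mul_apply, Pi.pow_apply]
    rw [hRv, hTv, hUv, hbm]
    generalize b ^ (m - 1) = X
    simp only [hm, hK, hbdef, hA]
    push_cast
    field_simp
    ring
  · refine (hR.mul (hT.add ((hU.pow 2).div_const 2))).congr_deriv ?_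
    simp only [Pi.add_apply, Pi.mul_apply, Pi.pow_apply]
    push_cast
    ring
  · refine (((hR.mul hU).mul (hT.add ((hU.pow 2).div_const 2))).add (hU.mul hP)).congr_deriv ?_
    simp only [Pi.add_apply, Pi.mul_apply, Pi.pow_apply]
    rw [hPv, hRv, hTv, hUv, hbm]
    generalize b ^ (m - 1) = X
    simp only [hm, hK, hbdef, hA]
    push_cast
    field_simp
    ring

theorem approximate_rarefaction_solves_euler
    (γ k um : ℝ) (hγ : 1 < γ) (hk : 0 < k)
    (I : Set ℝ) (hIopen : IsOpen I) (hIconn : I.OrdConnected)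
    (w : ℝ → ℝ → ℝ)
    (hwC2 : ContDiffOn ℝ 2 (fun q : ℝ × ℝ => w q.1 q.2) (Set.univ ×ˢ I))
    (hwgt : ∀ x t, w x t > um)
    (hwB : ∀ x : ℝ, ∀ t ∈ I,
      deriv (fun s => w x s) t + w x t * deriv (fun z => w z t) x = 0)
    (ub ρb θb pb : ℝ → ℝ → ℝ)
    (hub : ∀ x t, ub x t = (2 * w x t + (γ - 1) * um) / (γ + 1))
    (hρb : ∀ x t, ρb x t = ((γ - 1) * (ub x t - um) / (2 * k)) ^ (2 / (γ - 1)))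
    (hθb : ∀ x t, θb x t = k ^ 2 / (γ * (γ - 1)) * ρb x t ^ (γ - 1))
    (hpb : ∀ x t, pb x t = (γ - 1) * ρb x t * θb x t) :
    ∀ x : ℝ, ∀ t ∈ I,
      (deriv (fun s => ρb x s) t + deriv (fun z => ρb z t * ub z t) x = 0) ∧
      (deriv (fun s => ρb x s * ub x s) t
        + deriv (fun z => ρb z t * ub z t ^ 2 + pb z t) x = 0) ∧
      (deriv (fun s => ρb x s * (θb x s + ub x s ^ 2 / 2)) t
        + deriv (fun z =>
            ρb z t * ub z t * (θb z t + ub z t ^ 2 / 2) + ub z t * pb z t) x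
        = 0) := by
  have hγ1 : γ - 1 ≠ 0 := by linarith
  have hγ2 : γ + 1 ≠ 0 := by linarith
  have hγ0 : γ ≠ 0 := by linarith
  have hk' : k ≠ 0 := hk.ne'
  have hApos : 0 < (γ - 1) / ((γ + 1) * k) := div_pos (by linarith) (mul_pos (by linarith) hk)
  -- pointwise identification of the state variables with functions of w
  have hu' : ∀ a c, ub a c = Uf γ um (w a c) := fun a c => by rw [hub]; rfl
  have hρ' : ∀ a c, ρb a c = Rf γ k um (w a c) := by
    intro a c
    rw [hρb, hub]
    simp only [Rf]
    congr 1
    field_simp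
    ring
  have hθ' : ∀ a c, θb a c = Tf γ k um (w a c) := by
    intro a c
    have hb : (0:ℝ) < (γ - 1) / ((γ + 1) * k) * (w a c - um) :=
      mul_pos hApos (by have := hwgt a c; linarith)
    rw [hθb, hρ']
    simp only [Rf, Tf]
    congr 1
    rw [← Real.rpow_natCast ((γ - 1) / ((γ + 1) * k) * (w a c - um)) 2,
      ← Real.rpow_mul hb.le]
    congr 1
    push_cast
    field_simp
  have hp' : ∀ a c, pb a c = Pf γ k um (w a c) := by
    intro a c
    rw [hpb, hρ', hθ']
    simp only [Pf]
    ring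
  intro x t ht
  -- differentiability of the slices of w
  have hopen : IsOpen ((Set.univ : Set ℝ) ×ˢ I) := isOpen_univ.prod hIopen
  have hmem : (x, t) ∈ (Set.univ : Set ℝ) ×ˢ I := by simp [ht]
  have hWd : DifferentiableAt ℝ (fun q : ℝ × ℝ => w q.1 q.2) (x, t) :=
    ((hwC2.contDiffAt (hopen.mem_nhds hmem)).differentiableAt (by norm_num))
  have hwt : HasDerivAt (fun s => w x s) (deriv (fun s => w x s) t) t := by
    have hc : DifferentiableAt ℝ (fun s : ℝ => ((x, s) : ℝ × ℝ)) t :=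
      (differentiableAt_const x).prodMk differentiableAt_id
    have : DifferentiableAt ℝ (fun s => w x s) t := by
      have := hWd.comp t hc
      simpa [Function.comp_def] using this
    exact this.hasDerivAt
  have hwx : HasDerivAt (fun z => w z t) (deriv (fun z => w z t) x) x := by
    have hc : DifferentiableAt ℝ (fun z : ℝ => ((z, t) : ℝ × ℝ)) x :=
      differentiableAt_id.prodMk (differentiableAt_const t)
    have : DifferentiableAt ℝ (fun z => w z t) x := by
      have := hWd.comp x hc
      simpa [Function.comp_def] using this
    exact this.hasDerivAt
  set wt := deriv (fun s => w x s) t with hwtdef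
  set wx := deriv (fun z => w z t) x with hwxdef
  have hburg : wt + w x t * wx = 0 := hwB x t ht
  obtain ⟨d1, d2, d3, ⟨hF1, hG1⟩, ⟨hF2, hG2⟩, ⟨hF3, hG3⟩⟩ :=
    key γ k um hγ hk (hwgt x t)
  -- chain rules
  have comp_t : ∀ (F : ℝ → ℝ) (d : ℝ), HasDerivAt F d (w x t) →
      HasDerivAt (fun s => F (w x s)) (d * wt) t := by
    intro F d hF
    have := hF.comp t hwt
    simpa [Function.comp_def] using this
  have comp_x : ∀ (F : ℝ → ℝ) (d : ℝ), HasDerivAt F d (w x t) →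
      HasDerivAt (fun z => F (w z t)) (d * wx) x := by
    intro F d hF
    have := hF.comp x hwx
    simpa [Function.comp_def] using this
  refine ⟨?_, ?_, ?_⟩
  · have e1 : (fun s => ρb x s) = fun s => Rf γ k um (w x s) := funext fun s => hρ' x s
    have e2 : (fun z => ρb z t * ub z t) = fun z => Rf γ k um (w z t) * Uf γ um (w z t) :=
      funext fun z => by rw [hρ', hu']
    rw [e1, e2, (comp_t _ _ hF1).deriv,
      (comp_x (fun s => Rf γ k um s * Uf γ um s) _ hG1).deriv]
    linear_combination d1 * hburg
  · have e1 : (fun s => ρb x s * ub x s) = fun s => Rf γ k um (w x s) * Uf γ um (w x s) :=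
      funext fun s => by rw [hρ', hu']
    have e2 : (fun z => ρb z t * ub z t ^ 2 + pb z t)
        = fun z => Rf γ k um (w z t) * Uf γ um (w z t) ^ 2 + Pf γ k um (w z t) :=
      funext fun z => by rw [hρ', hu', hp']
    rw [e1, e2, (comp_t (fun s => Rf γ k um s * Uf γ um s) _ hF2).deriv,
      (comp_x (fun s => Rf γ k um s * Uf γ um s ^ 2 + Pf γ k um s) _ hG2).deriv]
    linear_combination d2 * hburg
  · have e1 : (fun s => ρb x s * (θb x s + ub x s ^ 2 / 2))
        = fun s => Rf γ k um (w x s) * (Tf γ k um (w x s) + Uf γ um (w x s) ^ 2 / 2) :=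
      funext fun s => by rw [hρ', hu', hθ']
    have e2 : (fun z => ρb z t * ub z t * (θb z t + ub z t ^ 2 / 2) + ub z t * pb z t)
        = fun z => Rf γ k um (w z t) * Uf γ um (w z t)
            * (Tf γ k um (w z t) + Uf γ um (w z t) ^ 2 / 2)
          + Uf γ um (w z t) * Pf γ k um (w z t) :=
      funext fun z => by rw [hρ', hu', hθ', hp']
    rw [e1, e2,
      (comp_t (fun s => Rf γ k um s * (Tf γ k um s + Uf γ um s ^ 2 / 2)) _ hF3).deriv,
      (comp_x (fun s => Rf γ k um s * Uf γ um s * (Tf γ k um s + Uf γ um s ^ 2 / 2)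
          + Uf γ um s * Pf γ k um s) _ hG3).deriv]
    linear_combination d3 * hburg
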